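/- Let C_1 and C_2 be two distinct cycles in a shortest cycle cover of the overlap graph, with c_1 ∈ C_1 and c_2 ∈ C_2. Then for any symbol p, |ov(c_1, c_2)|_p ≤ |C_1|_p + |C_2|_p. -/

import Mathlib

/-- The length of the overlap of `s` and `t`: the longest `y` such that
`s = x ++ y` and `t = y ++ z` with `x, z` non-empty. -/
def ovLen {α : Type*} [DecidableEq α] (s t : List α) : ℕ :=
  Nat.findGreatest
    (fun k => k < s.length ∧ k < t.length ∧ s.drop (s.length - k) = t.take k)
    (min s.length t.length)

/-- The overlap of `s` and `t`. -/
def ov {α : Type*} [DecidableEq α] (s t : List α) : List α :=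
  t.take (ovLen s t)

/-- The prefix part of `s` with respect to `t`: `s = pre s t ++ ov s t`. -/
def pre {α : Type*} [DecidableEq α] (s t : List α) : List α :=
  s.take (s.length - ovLen s t)

/-- The suffix part of `t` with respect to `s`: `t = ov s t ++ suf s t`. -/
def suf {α : Type*} [DecidableEq α] (s t : List α) : List α :=
  t.drop (ovLen s t)


namespace StmtAux

set_option linter.unusedSectionVars false

open Finset

variable {α : Type*} [DecidableEq α]

theorem ovLen_le (s t : List α) : ovLen s t ≤ min s.length t.length :=
  Nat.findGreatest_le _

theorem ovLen_spec (s t : List α) (h : ovLen s t ≠ 0) :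
    ovLen s t < s.length ∧ ovLen s t < t.length ∧
      s.drop (s.length - ovLen s t) = t.take (ovLen s t) :=
  Nat.findGreatest_of_ne_zero rfl h

theorem ovLen_lt_left (s t : List α) (hs : s ≠ []) : ovLen s t < s.length := by
  rcases Nat.eq_zero_or_pos (ovLen s t) with h | h
  · rw [h]; exact List.length_pos_iff.2 hs
  · exact (ovLen_spec s t h.ne').1

theorem ov_eq_drop (s t : List α) : s.drop (s.length - ovLen s t) = ov s t := by
  rcases Nat.eq_zero_or_pos (ovLen s t) with h | h
  · rw [ov, h]; simp
  · exact (ovLen_spec s t h.ne').2.2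

theorem pre_append_ov (s t : List α) : pre s t ++ ov s t = s := by
  rw [pre, ← ov_eq_drop, List.take_append_drop]

theorem ov_length (s t : List α) : (ov s t).length = ovLen s t := by
  rw [ov, List.length_take]
  exact Nat.min_eq_left ((ovLen_le s t).trans (Nat.min_le_right _ _))

theorem pre_length (s t : List α) : (pre s t).length = s.length - ovLen s t := by
  rw [pre, List.length_take]
  exact Nat.min_eq_left (Nat.sub_le _ _)

theorem one_le_pre_length (s t : List α) (hs : s ≠ []) : 1 ≤ (pre s t).length := by
  rw [pre_length]
  have := ovLen_lt_left s t hs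
  omega

/-- `s` occurs in the infinite word `f` at position `q`. -/
def Occ (f : ℕ → α) (q : ℕ) (s : List α) (dflt : α) : Prop :=
  ∀ j, j < s.length → s.getD j dflt = f (q + j)

theorem Occ.of_prefix {f : ℕ → α} {q : ℕ} {s t : List α} {dflt : α}
    (hp : t <+: s) (h : Occ f q s dflt) : Occ f q t dflt := by
  intro j hj
  have hjs : j < s.length := hj.trans_le hp.length_le
  rw [List.getD_eq_getElem _ _ hj, hp.getElem hj, ← List.getD_eq_getElem _ dflt hjs]
  exact h j hjs

theorem Occ.drop {f : ℕ → α} {q : ℕ} {s : List α} {dflt : α}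
    (h : Occ f q s dflt) (m : ℕ) : Occ f (q + m) (s.drop m) dflt := by
  intro j hj
  rw [List.length_drop] at hj
  rw [List.getD_eq_getElem _ _ (by rw [List.length_drop]; omega), List.getElem_drop,
    ← List.getD_eq_getElem _ dflt (by omega)]
  have := h (m + j) (by omega)
  rw [this]; ring_nf

theorem Occ.add_period {f : ℕ → α} {w q : ℕ} {s : List α} {dflt : α}
    (hper : ∀ n, f (n + w) = f n) (h : Occ f q s dflt) : Occ f (q + w) s dflt := by
  intro j hj
  rw [h j hj]
  have := hper (q + j)
  rw [← this]; ring_nf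

theorem periodic_mul {f : ℕ → α} {w : ℕ} (hper : ∀ n, f (n + w) = f n) :
    ∀ t n, f (n + w * t) = f n := by
  intro t
  induction t with
  | zero => simp
  | succ m ih =>
    intro n
    have h1 : n + w * (m + 1) = (n + w * m) + w := by ring
    rw [h1, hper, ih]

theorem Occ.mod {f : ℕ → α} {w q : ℕ} {s : List α} {dflt : α}
    (hper : ∀ n, f (n + w) = f n) (h : Occ f q s dflt) : Occ f (q % w) s dflt := by
  intro j hj
  rw [h j hj]
  conv_lhs => rw [← Nat.mod_add_div q w]
  have h1 : q % w + w * (q / w) + j = (q % w + j) + w * (q / w) := by ring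
  rw [h1, periodic_mul hper]


theorem count_eq_sum (l : List α) (p dflt : α) :
    l.count p = ∑ j ∈ range l.length, if l.getD j dflt = p then 1 else 0 := by
  induction l with
  | nil => simp
  | cons a l ih =>
    rw [List.count_cons, List.length_cons, Finset.sum_range_succ']
    simp only [List.getD_cons_succ, List.getD_cons_zero]
    rw [← ih]
    simp [beq_iff_eq]

/-- number of `p`'s in the window `[q, q+n)` of `f`. -/
def windowSum (f : ℕ → α) (p : α) (q n : ℕ) : ℕ :=
  ∑ j ∈ range n, if f (q + j) = p then 1 else 0

theorem count_occ {f : ℕ → α} {q : ℕ} {s : List α} {dflt : α} (h : Occ f q s dflt) (p : α) :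
    s.count p = windowSum f p q s.length := by
  rw [count_eq_sum s p dflt, windowSum]
  apply Finset.sum_congr rfl
  intro j hj
  rw [h j (Finset.mem_range.1 hj)]

theorem windowSum_mono (f : ℕ → α) (p : α) (q : ℕ) {n n' : ℕ} (h : n ≤ n') :
    windowSum f p q n ≤ windowSum f p q n' :=
  Finset.sum_le_sum_of_subset (Finset.range_subset_range.2 h)

theorem windowSum_succ_q {f : ℕ → α} {w : ℕ} (hper : ∀ n, f (n + w) = f n) (p : α) (q : ℕ) :
    windowSum f p (q + 1) w = windowSum f p q w := by
  set g : ℕ → ℕ := fun j => if f (q + j) = p then 1 else 0 with hg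
  have h1 : windowSum f p (q + 1) w = ∑ j ∈ range w, g (j + 1) := by
    apply Finset.sum_congr rfl
    intro j _
    have he : q + 1 + j = q + (j + 1) := by omega
    simp only [hg, he]
  have key : windowSum f p (q + 1) w + g 0 = windowSum f p q w + g w := by
    rw [h1, ← Finset.sum_range_succ' g w, Finset.sum_range_succ g w]
    rfl
  have h2 : g w = g 0 := by
    simp only [hg, Nat.add_zero, hper q]
  rw [h2] at key
  exact Nat.add_right_cancel key

theorem windowSum_eq_zero_q {f : ℕ → α} {w : ℕ} (hper : ∀ n, f (n + w) = f n) (p : α) (q : ℕ) :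
    windowSum f p q w = windowSum f p 0 w := by
  induction q with
  | zero => rfl
  | succ n ih => rw [windowSum_succ_q hper, ih]

theorem count_le_windowSum {f : ℕ → α} {q w : ℕ} {s : List α} {dflt : α}
    (h : Occ f q s dflt) (hlen : s.length ≤ w) (hper : ∀ n, f (n + w) = f n) (p : α) :
    s.count p ≤ windowSum f p 0 w := by
  rw [count_occ h p]
  exact (windowSum_mono f p q hlen).trans_eq (windowSum_eq_zero_q hper p q)


theorem sum_range_add' {M : Type*} [AddCommMonoid M] (g : ℕ → M) (a b : ℕ) :
    ∑ i ∈ range (a + b), g i = (∑ i ∈ range a, g i) + ∑ i ∈ range b, g (a + i) := by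
  induction b with
  | zero => simp
  | succ n ih =>
    rw [← Nat.add_assoc, Finset.sum_range_succ, ih,
      Finset.sum_range_succ (fun i => g (a + i)) n, add_assoc]

section Cycle

variable {S : Finset (List α)} (σ : Equiv.Perm {x // x ∈ S}) (c : {x // x ∈ S}) (dflt : α)

def xi (i : ℕ) : {x // x ∈ S} := (σ ^ i) c

def blk (i : ℕ) : List α := pre (xi σ c i).1 (σ (xi σ c i)).1

def bl (i : ℕ) : ℕ := (blk σ c i).length

def dd (i : ℕ) : ℕ := ∑ j ∈ range i, bl σ c j

def II (n : ℕ) : ℕ := Nat.findGreatest (fun i => dd σ c i ≤ n) n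

noncomputable def ff (n : ℕ) : α :=
  (blk σ c (II σ c n)).getD (n - dd σ c (II σ c n)) dflt

noncomputable def kk : ℕ := Function.minimalPeriod ⇑σ c

noncomputable def ww : ℕ := dd σ c (kk σ c)

variable (hne : ∀ x ∈ S, x ≠ ([] : List α))

theorem xi_succ (i : ℕ) : xi σ c (i + 1) = σ (xi σ c i) := by
  simp [xi, pow_succ']

include hne in
theorem bl_pos (i : ℕ) : 1 ≤ bl σ c i :=
  one_le_pre_length _ _ (hne _ (xi σ c i).2)

theorem dd_succ (i : ℕ) : dd σ c (i + 1) = dd σ c i + bl σ c i :=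
  Finset.sum_range_succ _ _

theorem dd_mono {i j : ℕ} (h : i ≤ j) : dd σ c i ≤ dd σ c j :=
  Finset.sum_le_sum_of_subset (Finset.range_subset_range.2 h)

include hne in
theorem le_dd (i : ℕ) : i ≤ dd σ c i := by
  calc i = ∑ _j ∈ range i, 1 := by simp
  _ ≤ dd σ c i := Finset.sum_le_sum fun j _ => bl_pos σ c hne j

include hne in
theorem II_spec {i j : ℕ} (hj : j < bl σ c i) : II σ c (dd σ c i + j) = i := by
  set n := dd σ c i + j with hn
  have hP : dd σ c i ≤ n := by omega
  have hle : i ≤ n := (le_dd σ c hne i).trans hP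
  have h1 : i ≤ II σ c n := Nat.le_findGreatest (P := fun i => dd σ c i ≤ n) hle hP
  have h2 : dd σ c (II σ c n) ≤ n := Nat.findGreatest_spec (P := fun i => dd σ c i ≤ n) hle hP
  by_contra hcon
  have h3 : i + 1 ≤ II σ c n := by omega
  have h4 : dd σ c (i + 1) ≤ dd σ c (II σ c n) := dd_mono σ c h3
  rw [dd_succ] at h4
  omega

include hne in
theorem ff_spec {i j : ℕ} (hj : j < bl σ c i) :
    ff σ c dflt (dd σ c i + j) = (blk σ c i).getD j dflt := by
  rw [ff, II_spec σ c hne hj, Nat.add_sub_cancel_left]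

theorem decomp (i : ℕ) :
    (xi σ c i).1 = blk σ c i ++ ov (xi σ c i).1 (σ (xi σ c i)).1 :=
  (pre_append_ov _ _).symm

theorem len_xi (i : ℕ) :
    (xi σ c i).1.length = bl σ c i + ovLen (xi σ c i).1 (σ (xi σ c i)).1 := by
  conv_lhs => rw [decomp σ c i]
  rw [List.length_append, ov_length]
  rfl

include hne in
theorem occ_main : ∀ j i, j < (xi σ c i).1.length →
    (xi σ c i).1.getD j dflt = ff σ c dflt (dd σ c i + j) := by
  intro j
  induction j using Nat.strong_induction_on with
  | _ j IH =>
    intro i hj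
    by_cases hcase : j < bl σ c i
    · conv_lhs => rw [decomp σ c i]
      rw [List.getD_append _ _ _ _ hcase, ff_spec σ c dflt hne hcase]
    · push_neg at hcase
      set ovi := ov (xi σ c i).1 (σ (xi σ c i)).1 with hovi
      have hlen := len_xi σ c i
      have hovlen : ovi.length = ovLen (xi σ c i).1 (σ (xi σ c i)).1 := ov_length _ _
      have hjov : j - bl σ c i < ovi.length := by omega
      have step1 : (xi σ c i).1.getD j dflt = ovi.getD (j - bl σ c i) dflt := by
        conv_lhs => rw [decomp σ c i]
        exact List.getD_append_right _ _ _ _ hcase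
      have hpre : ovi <+: (σ (xi σ c i)).1 := List.take_prefix _ _
      have hjlt : j - bl σ c i < (σ (xi σ c i)).1.length :=
        hjov.trans_le hpre.length_le
      have step2 : ovi.getD (j - bl σ c i) dflt
          = (σ (xi σ c i)).1.getD (j - bl σ c i) dflt := by
        rw [List.getD_eq_getElem _ _ hjov, List.getD_eq_getElem _ _ hjlt]
        exact hpre.getElem hjov
      have hxi1 : (σ (xi σ c i)).1 = (xi σ c (i + 1)).1 := by rw [xi_succ]
      have hblpos := bl_pos σ c hne i
      have hjlt' : j - bl σ c i < (xi σ c (i + 1)).1.length := by rw [← hxi1]; exact hjlt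
      have step3 := IH (j - bl σ c i) (by omega) (i + 1) hjlt'
      rw [step1, step2, hxi1, step3, dd_succ]
      congr 1
      omega

theorem kk_pos : 0 < kk σ c := by
  have hpt : Function.IsPeriodicPt ⇑σ (orderOf σ) c := by
    show (⇑σ)^[orderOf σ] c = c
    rw [Equiv.Perm.iterate_eq_pow, pow_orderOf_eq_one]
    rfl
  exact hpt.minimalPeriod_pos (orderOf_pos σ)

theorem xi_add_k (i : ℕ) : xi σ c (i + kk σ c) = xi σ c i := by
  show (σ ^ (i + kk σ c)) c = (σ ^ i) c
  rw [pow_add, Equiv.Perm.mul_apply]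
  congr 1
  show (σ ^ kk σ c) c = c
  rw [← Equiv.Perm.iterate_eq_pow]
  exact Function.iterate_minimalPeriod

theorem blk_add_k (i : ℕ) : blk σ c (i + kk σ c) = blk σ c i := by
  simp only [blk, xi_add_k]

theorem bl_add_k (i : ℕ) : bl σ c (i + kk σ c) = bl σ c i := by
  simp only [bl, blk_add_k]

theorem dd_add_k (i : ℕ) : dd σ c (i + kk σ c) = dd σ c i + ww σ c := by
  induction i with
  | zero => simp [ww, dd]
  | succ n ih =>
    have he : n + 1 + kk σ c = (n + kk σ c) + 1 := by omega
    rw [he, dd_succ, ih, bl_add_k, dd_succ]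
    ring

include hne in
theorem ww_pos : 0 < ww σ c :=
  (kk_pos σ c).trans_le (le_dd σ c hne _)

include hne in
theorem ff_per (n : ℕ) : ff σ c dflt (n + ww σ c) = ff σ c dflt n := by
  set i := II σ c n with hi
  have hII : Nat.findGreatest (fun i => dd σ c i ≤ n) n = i := rfl
  have h2 : dd σ c i ≤ n :=
    Nat.findGreatest_spec (P := fun i => dd σ c i ≤ n) (Nat.zero_le n) (by simp [dd])
  have h3 : n < dd σ c (i + 1) := by
    by_cases hc : i + 1 ≤ n
    · by_contra hcon
      exact Nat.findGreatest_is_greatest (P := fun i => dd σ c i ≤ n) (k := i + 1)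
        (by omega) hc (by omega)
    · have := le_dd σ c hne (i + 1)
      omega
  set j := n - dd σ c i with hj
  have hjb : j < bl σ c i := by
    have := dd_succ σ c i
    omega
  have hn : n = dd σ c i + j := by omega
  have e1 : ff σ c dflt n = (blk σ c i).getD j dflt := by
    rw [hn]; exact ff_spec σ c dflt hne hjb
  have hjb' : j < bl σ c (i + kk σ c) := by rwa [bl_add_k]
  have e2 : ff σ c dflt (n + ww σ c) = (blk σ c (i + kk σ c)).getD j dflt := by
    have he : n + ww σ c = dd σ c (i + kk σ c) + j := by rw [dd_add_k]; omega
    rw [he]; exact ff_spec σ c dflt hne hjb'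
  rw [e1, e2, blk_add_k]

include hne in
theorem occ_all (i : ℕ) : Occ (ff σ c dflt) (dd σ c i) (xi σ c i).1 dflt :=
  fun j hj => occ_main σ c dflt hne j i hj

include hne in
theorem occ_zero : Occ (ff σ c dflt) 0 c.1 dflt := by
  have h := occ_all σ c dflt hne 0
  have h1 : xi σ c 0 = c := by simp [xi]
  have h2 : dd σ c 0 = 0 := by simp [dd]
  rwa [h1, h2] at h

theorem xi_injOn {i j : ℕ} (hi : i < kk σ c) (hj : j < kk σ c)
    (hij : xi σ c i = xi σ c j) : i = j := by
  have key : ∀ a b : ℕ, a ≤ b → b < kk σ c → xi σ c a = xi σ c b → a = b := by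
    intro a b hab hb hxab
    by_contra hcon
    have hd : 0 < b - a := by omega
    have hx : (σ ^ a) ((σ ^ (b - a)) c) = (σ ^ a) c := by
      have : (σ ^ b) c = (σ ^ a) c := hxab.symm
      rw [← this]
      show ((σ ^ a) * (σ ^ (b - a))) c = (σ ^ b) c
      rw [← pow_add]
      congr 2
      omega
    have hper : (σ ^ (b - a)) c = c := (σ ^ a).injective hx
    have hpt : Function.IsPeriodicPt ⇑σ (b - a) c := by
      show (⇑σ)^[b - a] c = c
      rw [Equiv.Perm.iterate_eq_pow]
      exact hper
    have := hpt.minimalPeriod_le hd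
    have : kk σ c ≤ b - a := this
    omega
  rcases le_total i j with h | h
  · exact key i j h hj hij
  · exact (key j i h hi hij.symm).symm

theorem sum_cycle [DecidableRel σ.SameCycle] (g : {x // x ∈ S} → ℕ) :
    ∑ i ∈ range (kk σ c), g (xi σ c i)
      = ∑ y ∈ univ.filter (fun y => σ.SameCycle c y), g y := by
  have himg : (range (kk σ c)).image (xi σ c)
      = univ.filter (fun y => σ.SameCycle c y) := by
    ext y
    simp only [Finset.mem_image, Finset.mem_range, Finset.mem_filter, Finset.mem_univ,
      true_and]
    constructor
    · rintro ⟨i, _, rfl⟩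
      exact ⟨(i : ℤ), by simp [xi, zpow_natCast]⟩
    · intro hy
      obtain ⟨i, _, hiy⟩ := hy.exists_pow_eq'
      refine ⟨i % kk σ c, Nat.mod_lt _ (kk_pos σ c), ?_⟩
      show (σ ^ (i % kk σ c)) c = y
      rw [← Equiv.Perm.iterate_eq_pow]
      rw [kk] at *
      rw [Function.iterate_mod_minimalPeriod_eq, Equiv.Perm.iterate_eq_pow]
      exact hiy
  rw [← himg, Finset.sum_image]
  intro i hi j hj hij
  exact xi_injOn σ c (Finset.mem_range.1 hi) (Finset.mem_range.1 hj) hij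

include hne in
theorem window_eq (p : α) : windowSum (ff σ c dflt) p 0 (ww σ c)
    = ∑ i ∈ range (kk σ c), (blk σ c i).count p := by
  have key : ∀ m, windowSum (ff σ c dflt) p 0 (dd σ c m)
      = ∑ i ∈ range m, (blk σ c i).count p := by
    intro m
    induction m with
    | zero => simp [windowSum, dd]
    | succ n ih =>
      rw [dd_succ, windowSum, sum_range_add', Finset.sum_range_succ, ← windowSum, ih]
      congr 1
      rw [count_eq_sum (blk σ c n) p dflt]
      apply Finset.sum_congr rfl
      intro j hj
      rw [Nat.zero_add, ff_spec σ c dflt hne (Finset.mem_range.1 hj)]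
  exact key (kk σ c)

include hne in
theorem ww_eq [DecidableRel σ.SameCycle] :
    ww σ c = ∑ y ∈ univ.filter (fun y => σ.SameCycle c y), (pre y.1 (σ y).1).length := by
  rw [← sum_cycle σ c (fun y => (pre y.1 (σ y).1).length)]
  rfl

include hne in
theorem window_eq_filter [DecidableRel σ.SameCycle] (p : α) :
    windowSum (ff σ c dflt) p 0 (ww σ c)
      = ∑ y ∈ univ.filter (fun y => σ.SameCycle c y), (pre y.1 (σ y).1).count p := by
  rw [window_eq σ c dflt hne p, ← sum_cycle σ c (fun y => (pre y.1 (σ y).1).count p)]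
  rfl

include hne in
theorem occ_mem (y : {x // x ∈ S}) (hy : σ.SameCycle c y) :
    ∃ e, e < ww σ c ∧ Occ (ff σ c dflt) e y.1 dflt := by
  obtain ⟨i, _, hiy⟩ := hy.exists_pow_eq'
  have hocc : Occ (ff σ c dflt) (dd σ c i) y.1 dflt := by
    have := occ_all σ c dflt hne i
    rwa [show xi σ c i = y from hiy] at this
  refine ⟨dd σ c i % ww σ c, Nat.mod_lt _ (ww_pos σ c hne), ?_⟩
  exact hocc.mod (ff_per σ c dflt hne)

end Cycle


theorem agree {f₁ f₂ : ℕ → α} {w₁ w₂ q ℓ : ℕ} (hw1 : 0 < w₁) (hw2 : 0 < w₂)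
    (hper1 : ∀ n, f₁ (n + w₁) = f₁ n) (hper2 : ∀ n, f₂ (n + w₂) = f₂ n)
    (hl : w₁ + w₂ ≤ ℓ) (hag : ∀ n < ℓ, f₂ n = f₁ (q + n)) :
    ∀ n, f₂ n = f₁ (q + n) := by
  intro n
  induction n using Nat.strong_induction_on with
  | _ n IH =>
    by_cases h : n < ℓ
    · exact hag n h
    · push_neg at h
      set m := n - w₁ - w₂ with hm
      have e1 : f₂ n = f₂ (m + w₁) := by
        have h1 : n = m + w₁ + w₂ := by omega
        rw [h1, hper2]
      have e2 : f₂ (m + w₁) = f₁ (q + (m + w₁)) := IH (m + w₁) (by omega)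
      have e3 : f₁ (q + (m + w₁)) = f₁ (q + m) := by
        have h2 : q + (m + w₁) = q + m + w₁ := by omega
        rw [h2, hper1]
      have e4 : f₁ (q + m) = f₂ m := (IH m (by omega)).symm
      have e5 : f₂ m = f₂ (m + w₂) := (hper2 m).symm
      have e6 : f₂ (m + w₂) = f₁ (q + (m + w₂)) := IH (m + w₂) (by omega)
      have e7 : f₁ (q + (m + w₂)) = f₁ (q + n) := by
        have h3 : q + n = q + (m + w₂) + w₁ := by omega
        rw [h3, hper1]
      rw [e1, e2, e3, e4, e5, e6, e7]

theorem occ_unique {S : Finset (List α)}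
    (hnosub : ∀ x ∈ S, ∀ y ∈ S, x ≠ y → ¬ x <:+: y)
    {f : ℕ → α} {e : ℕ} {dflt : α}
    (y z : {x // x ∈ S}) (h1 : Occ f e y.1 dflt) (h2 : Occ f e z.1 dflt) : y = z := by
  have key : ∀ y z : {x // x ∈ S}, y.1.length ≤ z.1.length →
      Occ f e y.1 dflt → Occ f e z.1 dflt → y = z := by
    intro y z hle hy hz
    have heq : y.1 = z.1.take y.1.length := by
      apply List.ext_getElem
      · rw [List.length_take]
        omega
      · intro i hi1 hi2
        have hiz : i < z.1.length := by omega
        rw [List.getElem_take]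
        rw [← List.getD_eq_getElem _ dflt hi1, ← List.getD_eq_getElem _ dflt hiz,
          hy i hi1, hz i hiz]
    by_cases hl : y.1.length = z.1.length
    · apply Subtype.ext
      rw [heq, hl, List.take_length]
    · exfalso
      have hpre : y.1 <+: z.1 := by
        rw [heq]; exact List.take_prefix _ _
      have hne' : y.1 ≠ z.1 := fun hc => hl (by rw [hc])
      exact hnosub y.1 y.2 z.1 z.2 hne' hpre.isInfix
  rcases le_total y.1.length z.1.length with h | h
  · exact key y z h h1 h2
  · exact (key z y h h2 h1).symm

theorem pre_le_gap {S : Finset (List α)}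
    (hnosub : ∀ x ∈ S, ∀ y ∈ S, x ≠ y → ¬ x <:+: y)
    {f : ℕ → α} {e g : ℕ} {dflt : α} (hg : 1 ≤ g)
    (y z : {x // x ∈ S}) (hyz : y ≠ z)
    (hy : Occ f e y.1 dflt) (hz : Occ f (e + g) z.1 dflt) :
    (pre y.1 z.1).length ≤ g := by
  by_cases hly : y.1.length ≤ g
  · rw [pre_length]
    omega
  · push_neg at hly
    set k := y.1.length - g with hk
    have hzlen : k < z.1.length := by
      by_contra hcon
      push_neg at hcon
      have heq : z.1 = (y.1.drop g).take z.1.length := by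
        apply List.ext_getElem
        · rw [List.length_take, List.length_drop]
          omega
        · intro i hi1 hi2
          have hgi : g + i < y.1.length := by
            rw [List.length_take, List.length_drop] at hi2
            omega
          rw [List.getElem_take, List.getElem_drop]
          rw [← List.getD_eq_getElem _ dflt hi1, ← List.getD_eq_getElem _ dflt hgi,
            hz i hi1, hy (g + i) hgi]
          congr 1
          omega
      have hinf : z.1 <:+: y.1 := by
        rw [heq]
        exact (List.take_prefix _ _).isInfix.trans (List.drop_suffix _ _).isInfix
      have hne' : z.1 ≠ y.1 := by
        intro hc
        rw [hc] at hcon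
        omega
      exact hnosub z.1 z.2 y.1 y.2 hne' hinf
    have hdt : y.1.drop (y.1.length - k) = z.1.take k := by
      have hyk : y.1.length - k = g := by omega
      rw [hyk]
      apply List.ext_getElem
      · rw [List.length_take, List.length_drop]
        omega
      · intro i hi1 hi2
        have hik : i < k := by
          rw [List.length_drop] at hi1
          omega
        have hgi : g + i < y.1.length := by omega
        have hiz : i < z.1.length := by omega
        rw [List.getElem_take, List.getElem_drop]
        rw [← List.getD_eq_getElem _ dflt hgi, ← List.getD_eq_getElem _ dflt hiz,
          hy (g + i) hgi, hz i hiz]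
        congr 1
        omega
    have hov : k ≤ ovLen y.1 z.1 := by
      apply Nat.le_findGreatest
      · omega
      · exact ⟨by omega, hzlen, hdt⟩
    rw [pre_length]
    omega

theorem succ_mod_inj {m i j : ℕ} (hi : i < m) (hj : j < m)
    (h : (i + 1) % m = (j + 1) % m) : i = j := by
  by_cases h1 : i + 1 < m
  · by_cases h2 : j + 1 < m
    · rw [Nat.mod_eq_of_lt h1, Nat.mod_eq_of_lt h2] at h
      omega
    · have hj1 : j + 1 = m := by omega
      rw [Nat.mod_eq_of_lt h1, hj1, Nat.mod_self] at h
      omega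
  · have hi1 : i + 1 = m := by omega
    by_cases h2 : j + 1 < m
    · rw [hi1, Nat.mod_self, Nat.mod_eq_of_lt h2] at h
      omega
    · omega

theorem telescope (u : ℕ → ℕ) :
    ∀ t, (∀ i, i < t → u i ≤ u (i + 1)) →
      (∑ i ∈ range t, (u (i + 1) - u i)) + u 0 = u t := by
  intro t
  induction t with
  | zero => simp
  | succ n ih =>
    intro hmono
    rw [Finset.sum_range_succ]
    have h1 := ih (fun i hi => hmono i (by omega))
    have h2 := hmono n (by omega)
    omega

theorem map_sum_range (G : ℕ → ℕ) (l : List ℕ) :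
    (l.map G).sum = ∑ i ∈ range l.length, G (l.getD i 0) := by
  induction l with
  | nil => simp
  | cons a l ih =>
    rw [List.map_cons, List.sum_cons, List.length_cons, Finset.sum_range_succ']
    simp only [List.getD_cons_succ, List.getD_cons_zero]
    rw [← ih]
    ring


theorem no_long_overlap {S : Finset (List α)} (hne : ∀ x ∈ S, x ≠ ([] : List α))
    (hnosub : ∀ x ∈ S, ∀ y ∈ S, x ≠ y → ¬ x <:+: y)
    (σ : Equiv.Perm {x // x ∈ S}) [DecidableRel σ.SameCycle]
    (hshort : ∀ τ : Equiv.Perm {x // x ∈ S},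
      ∑ x : {x // x ∈ S}, (pre x.1 (σ x).1).length ≤
        ∑ x : {x // x ∈ S}, (pre x.1 (τ x).1).length)
    (c₁ c₂ : {x // x ∈ S}) (hdiff : ¬ σ.SameCycle c₁ c₂) (dflt : α)
    (hlong : ww σ c₁ + ww σ c₂ ≤ (ov c₁.1 c₂.1).length) : False := by
  classical
  set w₁ := ww σ c₁ with hw₁
  set w₂ := ww σ c₂ with hw₂
  set f₁ := ff σ c₁ dflt with hf₁
  set f₂ := ff σ c₂ dflt with hf₂
  set q := c₁.1.length - ovLen c₁.1 c₂.1 with hq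
  have w1pos : 0 < w₁ := ww_pos σ c₁ hne
  have w2pos : 0 < w₂ := ww_pos σ c₂ hne
  have hper1 : ∀ n, f₁ (n + w₁) = f₁ n := ff_per σ c₁ dflt hne
  have hper2 : ∀ n, f₂ (n + w₂) = f₂ n := ff_per σ c₂ dflt hne
  have hocc1 : Occ f₁ q (ov c₁.1 c₂.1) dflt := by
    have h0 := occ_zero σ c₁ dflt hne
    have hd := h0.drop q
    rw [hq, ov_eq_drop] at hd
    simpa using hd
  have hocc2 : Occ f₂ 0 (ov c₁.1 c₂.1) dflt :=
    (occ_zero σ c₂ dflt hne).of_prefix (List.take_prefix _ _)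
  have hagfin : ∀ n < (ov c₁.1 c₂.1).length, f₂ n = f₁ (q + n) := by
    intro n hn
    have h2 := hocc2 n hn
    have h1 := hocc1 n hn
    rw [Nat.zero_add] at h2
    rw [← h2, h1]
  have hag : ∀ n, f₂ n = f₁ (q + n) :=
    agree w1pos w2pos hper1 hper2 hlong hagfin
  set D := (univ.filter (fun y => σ.SameCycle c₁ y))
      ∪ (univ.filter (fun y => σ.SameCycle c₂ y)) with hDdef
  have hD : ∀ y, y ∈ D ↔ (σ.SameCycle c₁ y ∨ σ.SameCycle c₂ y) := by
    intro y
    simp [hDdef]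
  have hDsig : ∀ y, σ y ∈ D ↔ y ∈ D := by
    intro y
    rw [hD, hD, Equiv.Perm.sameCycle_apply_right, Equiv.Perm.sameCycle_apply_right]
  have hoccD : ∀ y ∈ D, ∃ e, e < w₁ ∧ Occ f₁ e y.1 dflt := by
    intro y hy
    rcases (hD y).1 hy with h | h
    · exact occ_mem σ c₁ dflt hne y h
    · obtain ⟨e, _, hocc⟩ := occ_mem σ c₂ dflt hne y h
      rw [← hf₂] at hocc
      have htr : Occ f₁ (q + e) y.1 dflt := by
        intro j hj
        rw [hocc j hj, hag (e + j)]
        congr 1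
        omega
      exact ⟨(q + e) % w₁, Nat.mod_lt _ w1pos, htr.mod hper1⟩
  set o : {x // x ∈ S} → ℕ := fun y => if h : y ∈ D then (hoccD y h).choose else 0 with ho_def
  have ho : ∀ y ∈ D, o y < w₁ ∧ Occ f₁ (o y) y.1 dflt := by
    intro y hy
    simp only [ho_def, dif_pos hy]
    exact (hoccD y hy).choose_spec
  have hinj : ∀ y ∈ D, ∀ z ∈ D, o y = o z → y = z := by
    intro y hy z hz he
    exact occ_unique hnosub y z (ho y hy).2 (he ▸ (ho z hz).2)
  set E := D.image o with hEdef
  have hEcard : E.card = D.card := Finset.card_image_of_injOn hinj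
  have hc1D : c₁ ∈ D := (hD c₁).2 (Or.inl (Equiv.Perm.SameCycle.refl _ _))
  have hc2D : c₂ ∈ D := (hD c₂).2 (Or.inr (Equiv.Perm.SameCycle.refl _ _))
  have hne12 : c₁ ≠ c₂ := by
    rintro rfl
    exact hdiff (Equiv.Perm.SameCycle.refl _ _)
  have hD2 : 2 ≤ D.card := Finset.one_lt_card_iff.2 ⟨c₁, c₂, hc1D, hc2D, hne12⟩
  set M := E.sort (· ≤ ·) with hMdef
  set m := M.length with hmdef
  have hmE : m = E.card := Finset.length_sort _
  have hm2 : 2 ≤ m := by omega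
  have hMnodup : M.Nodup := Finset.sort_nodup _ _
  have hMsort : M.SortedLT := Finset.sortedLT_sort E
  have hMmem : ∀ a, a ∈ M ↔ a ∈ E := fun a => Finset.mem_sort _
  have hoE : ∀ y ∈ D, o y ∈ E := fun y hy => Finset.mem_image_of_mem o hy
  have hElt : ∀ e ∈ E, e < w₁ := by
    intro e he
    obtain ⟨y, hy, rfl⟩ := Finset.mem_image.1 he
    exact (ho y hy).1
  have hMlt : ∀ i, i < m → M.getD i 0 < w₁ := by
    intro i hi
    apply hElt
    rw [← hMmem, List.getD_eq_getElem _ _ hi]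
    exact List.getElem_mem _
  have hMmono : ∀ i j, i < j → j < m → M.getD i 0 < M.getD j 0 := by
    intro i j hij hj
    rw [List.getD_eq_getElem _ _ (by omega), List.getD_eq_getElem _ _ hj]
    exact List.SortedLT.strictMono_get hMsort (show (⟨i, by omega⟩ : Fin M.length) < ⟨j, hj⟩ from hij)
  have hpick : ∀ e ∈ E, ∃ y, y ∈ D ∧ o y = e := by
    intro e he
    obtain ⟨y, hy, hye⟩ := Finset.mem_image.1 he
    exact ⟨y, hy, hye⟩
  set pk : ℕ → {x // x ∈ S} := fun e => if h : e ∈ E then (hpick e h).choose else c₁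
    with hpkdef
  have hpk : ∀ e ∈ E, pk e ∈ D ∧ o (pk e) = e := by
    intro e he
    simp only [hpkdef, dif_pos he]
    exact (hpick e he).choose_spec
  have hidx : ∀ y ∈ D, M.idxOf (o y) < m := by
    intro y hy
    exact List.idxOf_lt_length_iff.2 ((hMmem _).2 (hoE y hy))
  have hgetD_idx : ∀ y ∈ D, M.getD (M.idxOf (o y)) 0 = o y := by
    intro y hy
    rw [List.getD_eq_getElem _ _ (hidx y hy)]
    exact List.getElem_idxOf (hidx y hy)
  set nxtE : {x // x ∈ S} → ℕ := fun y => M.getD ((M.idxOf (o y) + 1) % m) 0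
    with hnxtdef
  have hnxteq : ∀ y, nxtE y = M.getD ((M.idxOf (o y) + 1) % m) 0 := fun _ => rfl
  have hmpos : 0 < m := by omega
  have hnxtE : ∀ y, nxtE y ∈ E := by
    intro y
    rw [← hMmem, hnxteq]
    have hlt : (M.idxOf (o y) + 1) % m < m := Nat.mod_lt _ hmpos
    rw [List.getD_eq_getElem _ _ hlt]
    exact List.getElem_mem _
  set τf : {x // x ∈ S} → {x // x ∈ S} :=
    fun y => if y ∈ D then pk (nxtE y) else σ y with hτfdef
  have hτfD : ∀ y ∈ D, τf y = pk (nxtE y) := by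
    intro y hy
    simp only [hτfdef, if_pos hy]
  have hτfnD : ∀ y, y ∉ D → τf y = σ y := by
    intro y hy
    simp only [hτfdef, if_neg hy]
  have hτfD_mem : ∀ y ∈ D, τf y ∈ D := by
    intro y hy
    rw [hτfD y hy]
    exact (hpk _ (hnxtE y)).1
  have hinjf : Function.Injective τf := by
    intro a b hab
    by_cases ha : a ∈ D
    · by_cases hb : b ∈ D
      · rw [hτfD a ha, hτfD b hb] at hab
        have h1 : nxtE a = nxtE b := by
          have := congrArg o hab
          rwa [(hpk _ (hnxtE a)).2, (hpk _ (hnxtE b)).2] at this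
        have h2 : (M.idxOf (o a) + 1) % m = (M.idxOf (o b) + 1) % m := by
          have hia : (M.idxOf (o a) + 1) % m < m := Nat.mod_lt _ hmpos
          have hib : (M.idxOf (o b) + 1) % m < m := Nat.mod_lt _ hmpos
          rw [hnxteq, hnxteq] at h1
          rw [List.getD_eq_getElem _ _ hia, List.getD_eq_getElem _ _ hib] at h1
          exact (List.Nodup.getElem_inj_iff hMnodup).1 h1
        have h3 : M.idxOf (o a) = M.idxOf (o b) :=
          succ_mod_inj (hidx a ha) (hidx b hb) h2
        have h4 : o a = o b := by
          rw [← hgetD_idx a ha, ← hgetD_idx b hb, h3]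
        exact hinj a ha b hb h4
      · exfalso
        have h1 : τf a ∈ D := hτfD_mem a ha
        rw [hab, hτfnD b hb] at h1
        exact hb ((hDsig b).1 h1)
    · by_cases hb : b ∈ D
      · exfalso
        have h1 : τf b ∈ D := hτfD_mem b hb
        rw [← hab, hτfnD a ha] at h1
        exact ha ((hDsig a).1 h1)
      · rw [hτfnD a ha, hτfnD b hb] at hab
        exact σ.injective hab
  set τ : Equiv.Perm {x // x ∈ S} :=
    Equiv.ofBijective τf (Finite.injective_iff_bijective.1 hinjf) with hτdef
  have hτ : ∀ y, τ y = τf y := fun y => rfl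
  -- pointwise gap bound
  have hgap : ∀ y ∈ D, (pre y.1 (τf y).1).length ≤
      (if M.idxOf (o y) + 1 < m then M.getD (M.idxOf (o y) + 1) 0 - o y
        else w₁ + M.getD 0 0 - o y) := by
    intro y hy
    set i := M.idxOf (o y) with hidef
    set z := pk (nxtE y) with hzdef
    have hzD : z ∈ D := (hpk _ (hnxtE y)).1
    have hoz : o z = nxtE y := (hpk _ (hnxtE y)).2
    have hoccz : Occ f₁ (o z) z.1 dflt := (ho z hzD).2
    have hoccy : Occ f₁ (o y) y.1 dflt := (ho y hy).2
    rw [hτfD y hy, ← hzdef]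
    by_cases hcase : i + 1 < m
    · rw [if_pos hcase]
      have he' : nxtE y = M.getD (i + 1) 0 := by
        rw [hnxteq, ← hidef, Nat.mod_eq_of_lt hcase]
      have hlt : o y < M.getD (i + 1) 0 := by
        have := hMmono i (i + 1) (by omega) hcase
        rwa [hgetD_idx y hy] at this
      set g := M.getD (i + 1) 0 - o y with hgdef
      have hg1 : 1 ≤ g := by omega
      have hoccz' : Occ f₁ (o y + g) z.1 dflt := by
        have : o y + g = M.getD (i + 1) 0 := by omega
        rw [this, ← he', ← hoz]
        exact hoccz
      have hyz : y ≠ z := by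
        intro hc
        rw [← hc] at hoz
        rw [he'] at hoz
        omega
      exact pre_le_gap hnosub hg1 y z hyz hoccy hoccz'
    · rw [if_neg hcase]
      have him : i = m - 1 := by
        have := hidx y hy
        rw [← hidef] at this
        omega
      have he' : nxtE y = M.getD 0 0 := by
        rw [hnxteq, ← hidef]
        have : (i + 1) % m = 0 := by
          have : i + 1 = m := by
            have := hidx y hy
            rw [← hidef] at this
            omega
          rw [this, Nat.mod_self]
        rw [this]
      have hlt : M.getD 0 0 < o y := by
        have := hMmono 0 (m - 1) (by omega) (by omega)
        rw [← him, hidef, hgetD_idx y hy] at this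
        exact this
      have hyw : o y < w₁ := (ho y hy).1
      set g := w₁ + M.getD 0 0 - o y with hgdef
      have hg1 : 1 ≤ g := by omega
      have hoccz' : Occ f₁ (o y + g) z.1 dflt := by
        have hsh : Occ f₁ (M.getD 0 0 + w₁) z.1 dflt := by
          have := hoccz.add_period (w := w₁) hper1
          rwa [hoz, he'] at this
        have : o y + g = M.getD 0 0 + w₁ := by omega
        rw [this]
        exact hsh
      have hyz : y ≠ z := by
        intro hc
        rw [← hc] at hoz
        rw [he'] at hoz
        omega
      exact pre_le_gap hnosub hg1 y z hyz hoccy hoccz'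
  -- sum of gaps
  set G : ℕ → ℕ := fun e => if M.idxOf e + 1 < m then M.getD (M.idxOf e + 1) 0 - e
      else w₁ + M.getD 0 0 - e with hGdef
  have hGeq : ∀ e, G e = (if M.idxOf e + 1 < m then M.getD (M.idxOf e + 1) 0 - e
      else w₁ + M.getD 0 0 - e) := fun _ => rfl
  have hsumgap : ∑ e ∈ E, G e = w₁ := by
    have h1 : ∑ e ∈ E, G e = (M.map G).sum := by
      have h0 : M.toFinset = E := by
        rw [hMdef]
        exact Finset.sort_toFinset _ _
      rw [← h0]
      exact List.sum_toFinset G hMnodup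
    rw [h1, map_sum_range, ← hmdef]
    have hidxM : ∀ i, i < m → M.idxOf (M.getD i 0) = i := by
      intro i hi
      rw [List.getD_eq_getElem _ _ hi]
      have := List.get_idxOf hMnodup ⟨i, hi⟩
      simpa using this
    have h2 : ∀ i, i < m → G (M.getD i 0) =
        (if i + 1 < m then M.getD (i + 1) 0 - M.getD i 0
          else w₁ + M.getD 0 0 - M.getD i 0) := by
      intro i hi
      rw [hGeq, hidxM i hi]
    rw [Finset.sum_congr rfl (fun i hi => h2 i (Finset.mem_range.1 hi))]
    have hm1 : m = (m - 1) + 1 := by omega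
    rw [hm1, Finset.sum_range_succ]
    have h3 : ∀ i ∈ range (m - 1),
        (if i + 1 < (m-1)+1 then M.getD (i + 1) 0 - M.getD i 0
          else w₁ + M.getD 0 0 - M.getD i 0) = M.getD (i + 1) 0 - M.getD i 0 := by
      intro i hi
      rw [if_pos (by have := Finset.mem_range.1 hi; omega)]
    rw [Finset.sum_congr rfl h3]
    rw [if_neg (by omega)]
    have htel : (∑ i ∈ range (m - 1), (M.getD (i + 1) 0 - M.getD i 0)) + M.getD 0 0
        = M.getD (m - 1) 0 :=
      telescope (fun i => M.getD i 0) (m - 1)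
        (fun i hi => le_of_lt (hMmono i (i + 1) (by omega) (by omega)))
    have hlast : M.getD 0 0 ≤ M.getD (m - 1) 0 := by
      rcases Nat.eq_or_lt_of_le (show 0 ≤ m - 1 by omega) with h | h
      · rw [← h]
      · exact le_of_lt (hMmono 0 (m - 1) h (by omega))
    have hwlt : M.getD (m - 1) 0 < w₁ := hMlt _ (by omega)
    omega
  -- total over D
  have hDsum : ∑ y ∈ D, (pre y.1 (τf y).1).length ≤ w₁ := by
    have h1 : ∑ y ∈ D, (pre y.1 (τf y).1).length ≤ ∑ y ∈ D, G (o y) := by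
      apply Finset.sum_le_sum
      intro y hy
      have := hgap y hy
      rw [hGeq]
      exact this
    have h2 : ∑ y ∈ D, G (o y) = ∑ e ∈ E, G e := by
      rw [hEdef]
      exact (Finset.sum_image (fun y hy z hz h => hinj y hy z hz h)).symm
    omega
  -- σ-sum over D
  have hdisj : Disjoint (univ.filter (fun y => σ.SameCycle c₁ y))
      (univ.filter (fun y => σ.SameCycle c₂ y)) := by
    rw [Finset.disjoint_left]
    intro y hy1 hy2
    rw [Finset.mem_filter] at hy1 hy2
    exact hdiff (hy1.2.trans hy2.2.symm)
  have hσsum : ∑ y ∈ D, (pre y.1 (σ y).1).length = w₁ + w₂ := by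
    rw [hDdef, Finset.sum_union hdisj, hw₁, hw₂, ww_eq σ c₁ hne, ww_eq σ c₂ hne]
  -- global sums
  have hsplit : ∀ g : {x // x ∈ S} → ℕ,
      ∑ y : {x // x ∈ S}, g y = ∑ y ∈ D, g y + ∑ y ∈ univ.filter (fun y => y ∉ D), g y := by
    intro g
    rw [← Finset.sum_filter_add_sum_filter_not univ (fun y => y ∈ D) g]
    congr 1
    apply Finset.sum_congr _ (fun _ _ => rfl)
    ext y
    simp
  have hshortτ := hshort τ
  rw [hsplit (fun y => (pre y.1 (σ y).1).length),
    hsplit (fun y => (pre y.1 (τ y).1).length)] at hshortτ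
  have hoffeq : ∑ y ∈ univ.filter (fun y => y ∉ D), (pre y.1 (τ y).1).length
      = ∑ y ∈ univ.filter (fun y => y ∉ D), (pre y.1 (σ y).1).length := by
    apply Finset.sum_congr rfl
    intro y hy
    rw [Finset.mem_filter] at hy
    rw [hτ y, hτfnD y hy.2]
  rw [hoffeq] at hshortτ
  have hτsum : ∑ y ∈ D, (pre y.1 (τ y).1).length ≤ w₁ := by
    calc ∑ y ∈ D, (pre y.1 (τ y).1).length
        = ∑ y ∈ D, (pre y.1 (τf y).1).length := by
          apply Finset.sum_congr rfl
          intro y _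
          rw [hτ y]
      _ ≤ w₁ := hDsum
  omega

end StmtAux



open Finset in
/-- Occurrence-counting bound on overlaps between nodes of two distinct cycles
of a shortest cycle cover of the overlap graph.  A cycle cover of the complete
digraph on `S` is a permutation `σ` of `S`; its total length is
`∑ x, |pref(x, σ x)|`, and the `p`-count of the cycle containing `c` is the sum
of `|pref(x, σ x)|_p` over the orbit of `c`. -/
theorem stmt_7 {α : Type*} [DecidableEq α] (S : Finset (List α))
    (hne : ∀ x ∈ S, x ≠ ([] : List α))
    (hnosub : ∀ x ∈ S, ∀ y ∈ S, x ≠ y → ¬ x <:+: y)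
    (σ : Equiv.Perm {x // x ∈ S})
    [DecidableRel σ.SameCycle]
    (hshort : ∀ τ : Equiv.Perm {x // x ∈ S},
      ∑ x : {x // x ∈ S}, (pre x.1 (σ x).1).length ≤
        ∑ x : {x // x ∈ S}, (pre x.1 (τ x).1).length)
    (c₁ c₂ : {x // x ∈ S}) (hdiff : ¬ σ.SameCycle c₁ c₂) (p : α) :
    (ov c₁.1 c₂.1).count p ≤
      (∑ x ∈ univ.filter (fun x => σ.SameCycle c₁ x), (pre x.1 (σ x).1).count p) +
      (∑ x ∈ univ.filter (fun x => σ.SameCycle c₂ x), (pre x.1 (σ x).1).count p) := by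
  classical
  obtain ⟨dflt, rest, hc1⟩ : ∃ a l, c₁.1 = a :: l := by
    rcases hx : c₁.1 with _ | ⟨a, l⟩
    · exact absurd hx (hne c₁.1 c₁.2)
    · exact ⟨a, l, rfl⟩
  have w1pos : 0 < StmtAux.ww σ c₁ := StmtAux.ww_pos σ c₁ hne
  have w2pos : 0 < StmtAux.ww σ c₂ := StmtAux.ww_pos σ c₂ hne
  have hovlen : (ov c₁.1 c₂.1).length = ovLen c₁.1 c₂.1 := StmtAux.ov_length _ _
  have hocc1 : StmtAux.Occ (StmtAux.ff σ c₁ dflt) (c₁.1.length - ovLen c₁.1 c₂.1)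
      (ov c₁.1 c₂.1) dflt := by
    have h0 := StmtAux.occ_zero σ c₁ dflt hne
    have hd := h0.drop (c₁.1.length - ovLen c₁.1 c₂.1)
    rw [StmtAux.ov_eq_drop] at hd
    simpa using hd
  have hocc2 : StmtAux.Occ (StmtAux.ff σ c₂ dflt) 0 (ov c₁.1 c₂.1) dflt :=
    (StmtAux.occ_zero σ c₂ dflt hne).of_prefix (List.take_prefix _ _)
  by_cases hcase : (ov c₁.1 c₂.1).length ≤ StmtAux.ww σ c₁ + StmtAux.ww σ c₂
  · have hsplit : (ov c₁.1 c₂.1).count p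
        = ((ov c₁.1 c₂.1).take (StmtAux.ww σ c₁)).count p
          + ((ov c₁.1 c₂.1).drop (StmtAux.ww σ c₁)).count p := by
      conv_lhs => rw [← List.take_append_drop (StmtAux.ww σ c₁) (ov c₁.1 c₂.1)]
      rw [List.count_append]
    have hb1 : ((ov c₁.1 c₂.1).take (StmtAux.ww σ c₁)).count p
        ≤ ∑ x ∈ univ.filter (fun x => σ.SameCycle c₁ x), (pre x.1 (σ x).1).count p := by
      have hocct : StmtAux.Occ (StmtAux.ff σ c₁ dflt) (c₁.1.length - ovLen c₁.1 c₂.1)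
          ((ov c₁.1 c₂.1).take (StmtAux.ww σ c₁)) dflt :=
        hocc1.of_prefix (List.take_prefix _ _)
      have hlen : ((ov c₁.1 c₂.1).take (StmtAux.ww σ c₁)).length ≤ StmtAux.ww σ c₁ := by
        simp [List.length_take]
      have hfin := StmtAux.count_le_windowSum hocct hlen (StmtAux.ff_per σ c₁ dflt hne) p
      rwa [StmtAux.window_eq_filter σ c₁ dflt hne p] at hfin
    have hb2 : ((ov c₁.1 c₂.1).drop (StmtAux.ww σ c₁)).count p
        ≤ ∑ x ∈ univ.filter (fun x => σ.SameCycle c₂ x), (pre x.1 (σ x).1).count p := by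
      have hoccd := hocc2.drop (StmtAux.ww σ c₁)
      have hoccd' : StmtAux.Occ (StmtAux.ff σ c₂ dflt) (StmtAux.ww σ c₁)
          ((ov c₁.1 c₂.1).drop (StmtAux.ww σ c₁)) dflt := by simpa using hoccd
      have hlen : ((ov c₁.1 c₂.1).drop (StmtAux.ww σ c₁)).length ≤ StmtAux.ww σ c₂ := by
        rw [List.length_drop]
        omega
      have hfin := StmtAux.count_le_windowSum hoccd' hlen (StmtAux.ff_per σ c₂ dflt hne) p
      rwa [StmtAux.window_eq_filter σ c₂ dflt hne p] at hfin
    omega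
  · exfalso
    push_neg at hcase
    exact StmtAux.no_long_overlap hne hnosub σ hshort c₁ c₂ hdiff dflt (le_of_lt hcase)
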